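/- Let k be a field, A a commutative unital k-algebra, and L a Lie algebra over k. Let I be an index set, ρ : I × I → Set I, (V_p)_{p∈I} k-submodules of L with ⨆_p V_p = L and such that for all p, q ∈ I and x ∈ V_p, y ∈ V_q, the bracket ⁅x,y⁆ lies in the submodule sum Σ_{r∈ρ(p,q)} V_r, and let (A_p)_{p∈I} be k-submodules of A satisfying the resonance condition: for all p, q ∈ I, a ∈ A_p, b ∈ A_q and every r ∈ ρ(p,q), the product a·b lies in A_r. Then the resonant subspace of A ⊗[k] L — the k-submodule spanned by the pure tensors a ⊗ x with a ∈ A_p and x ∈ V_p for some p ∈ I — is closed under the Lie bracket of A ⊗[k] L, i.e., it is a Lie subalgebra (the resonant subalgebra 𝒢_{S,R}). -/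

import Mathlib

open scoped TensorProduct

/-- The resonant subspace `⨁ₚ Aₚ ⊗ Vₚ` of the expanded Lie algebra `A ⊗[k] L` is closed under
the Lie bracket, i.e. it is a Lie subalgebra (the resonant subalgebra). -/
theorem resonant_subspace_closed_under_bracket
    (k A L : Type*) [Field k] [CommRing A] [Algebra k A]
    [LieRing L] [LieAlgebra k L]
    (I : Type*) (ρ : I × I → Set I)
    (V : I → Submodule k L) (S : I → Submodule k A)
    (hV : ⨆ p, V p = ⊤)
    (hbracket : ∀ p q : I, ∀ x ∈ V p, ∀ y ∈ V q, ⁅x, y⁆ ∈ ⨆ r ∈ ρ (p, q), V r)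
    (hres : ∀ p q : I, ∀ r ∈ ρ (p, q), ∀ a ∈ S p, ∀ b ∈ S q, a * b ∈ S r) :
    ∀ u v : A ⊗[k] L,
      u ∈ Submodule.span k {t : A ⊗[k] L | ∃ p a x, a ∈ S p ∧ x ∈ V p ∧ t = a ⊗ₜ[k] x} →
      v ∈ Submodule.span k {t : A ⊗[k] L | ∃ p a x, a ∈ S p ∧ x ∈ V p ∧ t = a ⊗ₜ[k] x} →
      ⁅u, v⁆ ∈ Submodule.span k {t : A ⊗[k] L | ∃ p a x, a ∈ S p ∧ x ∈ V p ∧ t = a ⊗ₜ[k] x} := by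
  have hsl : ∀ (c : k) (u v : A ⊗[k] L), ⁅c • u, v⁆ = c • ⁅u, v⁆ := by
    intro c u v
    rw [← algebraMap_smul A c u, smul_lie, algebraMap_smul]
  have hls : ∀ (c : k) (u v : A ⊗[k] L), ⁅u, c • v⁆ = c • ⁅u, v⁆ := by
    intro c u v
    rw [← algebraMap_smul A c v, lie_smul, algebraMap_smul]
  set T := Submodule.span k {t : A ⊗[k] L | ∃ p a x, a ∈ S p ∧ x ∈ V p ∧ t = a ⊗ₜ[k] x} with hT
  intro u v hu hv
  induction hu using Submodule.span_induction with
  | mem u hu =>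
    obtain ⟨p, a, x, ha, hx, rfl⟩ := hu
    induction hv using Submodule.span_induction with
    | mem v hv =>
      obtain ⟨q, b, y, hb, hy, rfl⟩ := hv
      rw [LieAlgebra.ExtendScalars.bracket_tmul]
      have hz := hbracket p q x hx y hy
      rw [iSup_subtype'] at hz
      refine Submodule.iSup_induction (motive := fun z => (a * b) ⊗ₜ[k] z ∈ T)
        (fun r : ρ (p, q) => V r.1) hz ?_ ?_ ?_
      · rintro ⟨r, hr⟩ z hzr
        exact Submodule.subset_span ⟨r, a * b, z, hres p q r hr a ha b hb, hzr, rfl⟩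
      · simp [TensorProduct.tmul_zero]
      · intro z w hz hw
        rw [TensorProduct.tmul_add]
        exact T.add_mem hz hw
    | zero => simp
    | add v w _ _ hv hw => rw [lie_add]; exact T.add_mem hv hw
    | smul c v _ hv => rw [hls]; exact T.smul_mem c hv
  | zero => simp
  | add u w _ _ hu hw => rw [add_lie]; exact T.add_mem hu hw
  | smul c u _ hu => rw [hsl]; exact T.smul_mem c hu
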